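/- Let A ⊆ ℝ² be a symmetric set and let a, b, c ∈ A. Then for all integers m, n which are not both odd, the point a + m·(b − a) + n·(c − a) belongs to A. -/

import Mathlib

/-- The Euclidean point reflection `S_x(y) = 2x − y` in `ℝ²`. -/
def S (a b : ℝ × ℝ) : ℝ × ℝ := 2 • a - b

/-- A set `A ⊆ ℝ²` is symmetric if `S_x(y) = 2x − y ∈ A` for all `x, y ∈ A`. -/
def SymSetR2 (A : Set (ℝ × ℝ)) : Prop := ∀ x ∈ A, ∀ y ∈ A, S x y ∈ A

lemma line_mem (A : Set (ℝ × ℝ)) (hA : SymSetR2 A) (a b : ℝ × ℝ)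
    (ha : a ∈ A) (hb : b ∈ A) : ∀ t : ℤ, a + t • (b - a) ∈ A := by
  have key : ∀ t : ℤ, (a + t • (b - a) ∈ A) ∧ (a + (t + 1) • (b - a) ∈ A) := by
    intro t
    induction t using Int.induction_on with
    | zero => constructor <;> simp [ha, hb]
    | succ k ih =>
      refine ⟨ih.2, ?_⟩
      have h := hA _ ih.2 _ ih.1
      have : S (a + ((k:ℤ) + 1) • (b - a)) (a + (k:ℤ) • (b - a))
          = a + ((k:ℤ) + 1 + 1) • (b - a) := by
        simp only [S]
        module
      rwa [this] at h
    | pred k ih =>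
      have e : (-(k:ℤ) - 1 + 1) = -(k:ℤ) := by ring
      rw [e]
      refine ⟨?_, ih.1⟩
      have h := hA _ ih.1 _ ih.2
      have : S (a + (-(k:ℤ)) • (b - a)) (a + (-(k:ℤ) + 1) • (b - a))
          = a + (-(k:ℤ) - 1) • (b - a) := by
        simp only [S]
        module
      rwa [this] at h
  exact fun t => (key t).1

/-- If `A ⊆ ℝ²` is symmetric and `a, b, c ∈ A`, then for all integers
`m, n` not both odd, `a + m·(b − a) + n·(c − a) ∈ A`. -/
theorem symmetric_affine_lattice_points (A : Set (ℝ × ℝ)) (hA : SymSetR2 A)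
    (a b c : ℝ × ℝ) (ha : a ∈ A) (hb : b ∈ A) (hc : c ∈ A) :
    ∀ m n : ℤ, ¬(Odd m ∧ Odd n) → a + m • (b - a) + n • (c - a) ∈ A := by
  have main : ∀ (b c : ℝ × ℝ), b ∈ A → c ∈ A → ∀ m n : ℤ, Even m →
      a + m • (b - a) + n • (c - a) ∈ A := by
    intro b c hb hc m n hm
    obtain ⟨k, hk⟩ := hm
    have h1 : a + k • (b - a) ∈ A := line_mem A hA a b ha hb k
    have h2 : a + (-n) • (c - a) ∈ A := line_mem A hA a c ha hc (-n)
    have h := hA _ h1 _ h2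
    have heq : S (a + k • (b - a)) (a + (-n) • (c - a))
        = a + m • (b - a) + n • (c - a) := by
      subst hk
      simp only [S]
      module
    rwa [heq] at h
  intro m n hmn
  rcases Int.even_or_odd m with hm | hm
  · exact main b c hb hc m n hm
  · have hn : Even n := by
      rcases Int.even_or_odd n with h | h
      · exact h
      · exact absurd ⟨hm, h⟩ hmn
    have h := main c b hc hb n m hn
    have : a + n • (c - a) + m • (b - a) = a + m • (b - a) + n • (c - a) := by ring
    rwa [this] at h
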